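/- Define rational 1-forms $\xi^\alpha_k(z)$ on $\mathbb{C}^*$ for $\alpha \in \{0,1\}$ recursively by $\xi^\alpha_{-1}(z) = z^{-\alpha}\,dz$ and $\xi^\alpha_k = -d\big(\xi^\alpha_{k-1}/dx\big)$ where $x(z) = z + 1/z$. Then for all $m \ge 0$ and $\alpha \in \{0,1\}$, the identity $x(z)\,\xi^\alpha_m(z) = 2\,\xi^{1-\alpha}_m(z) + (m+\alpha)\,\xi^\alpha_{m-1}(z)$ holds as an identity of rational 1-forms, where $\xi^\alpha_{-1}$ is given by the initial data above. -/

import Mathlib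

/-- The coefficient (w.r.t. `dz`) of the 1-form `ξ^α_{k-1}`: `xi α 0` is the coefficient of
`ξ^α_{-1}(z) = z^{-α} dz`, and `xi α (k+1)` is the coefficient of
`ξ^α_k = -d(ξ^α_{k-1}/dx)` where `x(z) = z + 1/z`, `dx = (1 - 1/z^2) dz`. -/
noncomputable def xi (α : ℕ) : ℕ → ℂ → ℂ
  | 0 => fun z => z ^ (-(α : ℤ))
  | (k + 1) => fun z => - deriv (fun w => xi α k w / (1 - 1 / w ^ 2)) z

namespace Stmt8Aux

def Ω : Set ℂ := {0, 1, -1}ᶜ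

lemma isOpen_Ω : IsOpen Ω :=
  ((Set.finite_singleton (-1:ℂ)).insert 1 |>.insert 0).isClosed.isOpen_compl

lemma mem_Ω {z : ℂ} : z ∈ Ω ↔ z ≠ 0 ∧ z ≠ 1 ∧ z ≠ -1 := by
  simp [Ω]

noncomputable def u (w : ℂ) : ℂ := 1 - 1 / w ^ 2

lemma u_ne {z : ℂ} (hz : z ∈ Ω) : u z ≠ 0 := by
  obtain ⟨h0, h1, h2⟩ := mem_Ω.mp hz
  have hsq : z ^ 2 ≠ 0 := pow_ne_zero _ h0
  intro h
  have : (z - 1) * (z + 1) = 0 := by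
    have hu : (1:ℂ) - 1 / z ^ 2 = 0 := h
    field_simp at hu
    linear_combination hu
  rcases mul_eq_zero.mp this with h' | h'
  · exact h1 (sub_eq_zero.mp h')
  · exact h2 (eq_neg_of_add_eq_zero_left h')

lemma analytic_u : AnalyticOnNhd ℂ u Ω := by
  have : AnalyticOnNhd ℂ (fun w : ℂ => 1 / w ^ 2) Ω := by
    apply AnalyticOnNhd.div analyticOnNhd_const (analyticOnNhd_id.pow 2)
    intro x hx
    exact pow_ne_zero _ (mem_Ω.mp hx).1
  exact analyticOnNhd_const.sub this

lemma analytic_xi (α k : ℕ) : AnalyticOnNhd ℂ (xi α k) Ω := by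
  induction k with
  | zero =>
    have : AnalyticOnNhd ℂ (fun z : ℂ => (z ^ α)⁻¹) Ω :=
      AnalyticOnNhd.inv (analyticOnNhd_id.pow α) fun x hx => pow_ne_zero _ (mem_Ω.mp hx).1
    have he : (fun z : ℂ => z ^ (-(α : ℤ))) = fun z : ℂ => (z ^ α)⁻¹ := by
      funext z; rw [zpow_neg, zpow_natCast]
    rw [show xi α 0 = fun z : ℂ => z ^ (-(α : ℤ)) from rfl, he]
    exact this
  | succ k ih =>
    have : AnalyticOnNhd ℂ (fun w => xi α k w / u w) Ω :=
      ih.div analytic_u fun x hx => u_ne hx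
    exact this.deriv.neg

lemma xi_succ (α k : ℕ) (z : ℂ) :
    xi α (k + 1) z = -deriv (fun w => xi α k w / u w) z := rfl

lemma key (f g p : ℂ → ℂ) (c : ℂ)
    (hf : AnalyticOnNhd ℂ f Ω) (hg : AnalyticOnNhd ℂ g Ω) (hp : AnalyticOnNhd ℂ p Ω)
    (hid : ∀ w ∈ Ω, (w + 1 / w) * f w = 2 * g w + c * p w)
    {z : ℂ} (hz : z ∈ Ω) :
    (z + 1 / z) * (-deriv (fun w => f w / u w) z)
      = 2 * (-deriv (fun w => g w / u w) z)
        + c * (-deriv (fun w => p w / u w) z) + f z := by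
  have h0 : z ≠ 0 := (mem_Ω.mp hz).1
  have huz : u z ≠ 0 := u_ne hz
  have dF : DifferentiableAt ℂ (fun w => f w / u w) z :=
    ((hf z hz).div (analytic_u z hz) huz).differentiableAt
  have dG : DifferentiableAt ℂ (fun w => g w / u w) z :=
    ((hg z hz).div (analytic_u z hz) huz).differentiableAt
  have dP : DifferentiableAt ℂ (fun w => p w / u w) z :=
    ((hp z hz).div (analytic_u z hz) huz).differentiableAt
  have dinv : DifferentiableAt ℂ (fun w : ℂ => 1 / w) z := by
    simp only [one_div]
    exact differentiableAt_inv h0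
  have dx : DifferentiableAt ℂ (fun w : ℂ => w + 1 / w) z :=
    differentiableAt_fun_id.add dinv
  have derivx : deriv (fun w : ℂ => w + 1 / w) z = u z := by
    rw [deriv_fun_add differentiableAt_fun_id dinv, deriv_id'']
    have : deriv (fun w : ℂ => 1 / w) z = -(z ^ 2)⁻¹ := by
      simp only [one_div]; exact deriv_inv
    rw [this, u]
    rw [one_div]
    ring
  have step1 : deriv (fun w => (w + 1 / w) * (f w / u w)) z
      = u z * (f z / u z) + (z + 1 / z) * deriv (fun w => f w / u w) z := by
    rw [deriv_fun_mul dx dF, derivx]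
  have heq : (fun w => (w + 1 / w) * (f w / u w))
      =ᶠ[nhds z] fun w => 2 * (g w / u w) + c * (p w / u w) := by
    filter_upwards [isOpen_Ω.mem_nhds hz] with w hw
    rw [← mul_div_assoc, hid w hw, add_div, mul_div_assoc, mul_div_assoc]
  have step3 : deriv (fun w => 2 * (g w / u w) + c * (p w / u w)) z
      = 2 * deriv (fun w => g w / u w) z + c * deriv (fun w => p w / u w) z := by
    rw [deriv_fun_add (dG.const_mul 2) (dP.const_mul c), deriv_const_mul 2 dG,
      deriv_const_mul c dP]
  have E : u z * (f z / u z) + (z + 1 / z) * deriv (fun w => f w / u w) z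
      = 2 * deriv (fun w => g w / u w) z + c * deriv (fun w => p w / u w) z := by
    rw [← step1, ← step3]
    exact heq.deriv_eq
  have hcancel : u z * (f z / u z) = f z := by
    rw [mul_comm, div_mul_cancel₀ _ huz]
  rw [hcancel] at E
  linear_combination -E

end Stmt8Aux

open Stmt8Aux in
/-- For all `m ≥ 0` and `α ∈ {0,1}`,
`x(z) ξ^α_m(z) = 2 ξ^{1-α}_m(z) + (m+α) ξ^α_{m-1}(z)` as rational 1-forms. -/
theorem stmt8 (α : ℕ) (hα : α ≤ 1) (m : ℕ) (z : ℂ)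
    (h0 : z ≠ 0) (h1 : z ≠ 1) (h2 : z ≠ -1) :
    (z + 1 / z) * xi α (m + 1) z
      = 2 * xi (1 - α) (m + 1) z + ((m : ℂ) + (α : ℂ)) * xi α m z := by
  have hz : z ∈ Ω := mem_Ω.mpr ⟨h0, h1, h2⟩
  clear h0 h1 h2
  induction m generalizing z with
  | zero =>
    have hz0 : z ≠ 0 := (mem_Ω.mp hz).1
    have hid : ∀ w ∈ Ω, (w + 1 / w) * xi α 0 w
        = 2 * xi (1 - α) 0 w + (1 - 2 * (α : ℂ)) * ((fun w => w ^ (1 - α) * u w) w) := by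
      intro w hw
      have hw0 : w ≠ 0 := (mem_Ω.mp hw).1
      interval_cases α <;>
        · simp only [xi, u, zpow_neg, zpow_natCast]
          field_simp
          ring
    have hkey := key (xi α 0) (xi (1 - α) 0) (fun w => w ^ (1 - α) * u w)
      (1 - 2 * (α : ℂ)) (analytic_xi α 0) (analytic_xi (1 - α) 0)
      (((analyticOnNhd_id.pow (1 - α)).mul analytic_u)) hid hz
    have hpu : deriv (fun w => ((fun w : ℂ => w ^ (1 - α) * u w) w) / u w) z
        = ((1 - α : ℕ) : ℂ) * z ^ (1 - α - 1) := by
      have heq2 : (fun w => ((fun w : ℂ => w ^ (1 - α) * u w) w) / u w)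
          =ᶠ[nhds z] fun w : ℂ => w ^ (1 - α) := by
        filter_upwards [isOpen_Ω.mem_nhds hz] with w hw
        exact mul_div_cancel_right₀ _ (u_ne hw)
      rw [heq2.deriv_eq, deriv_pow_field]
    rw [hpu] at hkey
    rw [xi_succ, xi_succ]
    rw [hkey]
    interval_cases α <;> simp [xi]
  | succ n ih =>
    have hkey := key (xi α (n + 1)) (xi (1 - α) (n + 1)) (xi α n) ((n : ℂ) + (α : ℂ))
      (analytic_xi α (n + 1)) (analytic_xi (1 - α) (n + 1)) (analytic_xi α n)
      (fun w hw => ih w hw) hz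
    rw [xi_succ, xi_succ]
    rw [← xi_succ α n] at hkey
    rw [hkey]
    push_cast
    ring
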